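/- arXiv:math/0106123 — 3 statements merged into one kernel-verified Lean document; each statement's English description precedes it below -/
import Mathlib

section
/- For every integer L ≥ 0 and every natural number n, the rational number b_L(n) is a positive integer. -/
open PowerSeries Finset

/-- The series `₀F_L(1,…,1;z) − 1 = ∑_{k≥1} z^k/(k!)^{L+1}` over `ℚ`. -/
noncomputable def hypFsub1 (L : ℕ) : PowerSeries ℚ :=
  PowerSeries.mk fun k => if k = 0 then 0 else 1 / (k.factorial : ℚ) ^ (L + 1)

/-- The exponential `exp f = ∑_{l≥0} f^l / l!` of a power series `f` with zero
constant term (for such `f`, `coeff n (f^l) = 0` for `l > n`, so the finite sum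
below is the full exponential series). -/
noncomputable def expPS (f : PowerSeries ℚ) : PowerSeries ℚ :=
  PowerSeries.mk fun n =>
    ∑ l ∈ Finset.range (n + 1), PowerSeries.coeff n (f ^ l) / (l.factorial : ℚ)

/-- `b_L(n) = (n!)^{L+1} · [z^n] exp(₀F_L(z) − 1)`. -/
noncomputable def bL (L n : ℕ) : ℚ :=
  (n.factorial : ℚ) ^ (L + 1) * PowerSeries.coeff n (expPS (hypFsub1 L))

/-- `S_L(n,l) = ((n!)^{L+1}/l!) · [z^n] (₀F_L(z) − 1)^l`, the generalized
Stirling numbers of the second kind of type `L`. -/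
noncomputable def SL (L n l : ℕ) : ℚ :=
  (n.factorial : ℚ) ^ (L + 1) / (l.factorial : ℚ) *
    PowerSeries.coeff n (hypFsub1 L ^ l)

/-- The series `∑_{k≥p+1} z^k/(k!)^{L+1}` over `ℚ`. -/
noncomputable def hypFtail (L p : ℕ) : PowerSeries ℚ :=
  PowerSeries.mk fun k => if k ≤ p then 0 else 1 / (k.factorial : ℚ) ^ (L + 1)

/-- `b_L(p,n) = (n!)^{L+1} · [z^n] exp(∑_{k≥p+1} z^k/(k!)^{L+1})`. -/
noncomputable def bLp (L p n : ℕ) : ℚ :=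
  (n.factorial : ℚ) ^ (L + 1) * PowerSeries.coeff n (expPS (hypFtail L p))

section Aux

theorem coeff_derivativeFun' (f : PowerSeries ℚ) (n : ℕ) :
    PowerSeries.coeff n f.derivativeFun = PowerSeries.coeff (n + 1) f * (n + 1) :=
  PowerSeries.coeff_derivative f n

lemma coeff_pow_eq_zero' {f : PowerSeries ℚ} (hf : PowerSeries.constantCoeff f = 0) :
    ∀ l n, n < l → PowerSeries.coeff n (f ^ l) = 0 := by
  intro l
  induction l with
  | zero => intro n hn; omega
  | succ l ih =>
    intro n hn
    rw [pow_succ, PowerSeries.coeff_mul]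
    refine Finset.sum_eq_zero fun p hp => ?_
    rw [Finset.HasAntidiagonal.mem_antidiagonal] at hp
    rcases Nat.eq_zero_or_pos p.2 with h | h
    · have : PowerSeries.coeff p.2 f = 0 := by rw [h]; simpa using hf
      simp [this]
    · have : p.1 < l := by omega
      simp [ih p.1 this]

lemma coeff_deriv_pow' (f : PowerSeries ℚ) (l n : ℕ) :
    ((n + 1 : ℕ) : ℚ) * PowerSeries.coeff (n + 1) (f ^ (l + 1)) =
    ((l + 1 : ℕ) : ℚ) * PowerSeries.coeff n (f ^ l * PowerSeries.derivativeFun f) := by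
  have h := (PowerSeries.derivative ℚ).leibniz_pow f (l + 1)
  have h3 := congrArg (PowerSeries.coeff n) h
  have hd : (PowerSeries.derivative ℚ) (f ^ (l + 1)) = PowerSeries.derivativeFun (f ^ (l + 1)) := rfl
  have hd2 : (PowerSeries.derivative ℚ) f = PowerSeries.derivativeFun f := rfl
  rw [hd, coeff_derivativeFun', map_nsmul, hd2] at h3
  have h4 : (f ^ (l + 1 - 1) • f.derivativeFun) = f ^ l * f.derivativeFun := by
    simp [smul_eq_mul]
  rw [h4, nsmul_eq_mul] at h3
  rw [mul_comm ((n+1:ℕ):ℚ), Nat.cast_add, Nat.cast_one, h3]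

lemma coeff_exp_trunc' {f : PowerSeries ℚ} (hf : PowerSeries.constantCoeff f = 0)
    {i n : ℕ} (hi : i ≤ n) :
    PowerSeries.coeff i (expPS f) =
      ∑ m ∈ Finset.range (n + 1), PowerSeries.coeff i (f ^ m) / (m.factorial : ℚ) := by
  rw [expPS, PowerSeries.coeff_mk]
  refine Finset.sum_subset (Finset.range_subset_range.2 (by omega)) fun m _ hm => ?_
  rw [Finset.mem_range, not_lt] at hm
  rw [coeff_pow_eq_zero' hf m i (by omega)]
  simp

lemma exp_rec' {f : PowerSeries ℚ} (hf : PowerSeries.constantCoeff f = 0) (n : ℕ) :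
    ((n + 1 : ℕ) : ℚ) * PowerSeries.coeff (n + 1) (expPS f) =
    ∑ p ∈ Finset.HasAntidiagonal.antidiagonal n,
      PowerSeries.coeff p.1 (expPS f) * PowerSeries.coeff p.2 (PowerSeries.derivativeFun f) := by
  rw [expPS, PowerSeries.coeff_mk, Finset.mul_sum, Finset.sum_range_succ']
  have h0 : ((n + 1 : ℕ) : ℚ) * (PowerSeries.coeff (n+1) (f ^ 0) / (Nat.factorial 0 : ℚ)) = 0 := by
    simp
  rw [h0, add_zero]
  have hstep : ∀ m ∈ Finset.range (n + 1),
      ((n + 1 : ℕ) : ℚ) * (PowerSeries.coeff (n+1) (f ^ (m+1)) / ((m+1).factorial : ℚ)) =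
      PowerSeries.coeff n (f ^ m * PowerSeries.derivativeFun f) / (m.factorial : ℚ) := by
    intro m _
    have key := coeff_deriv_pow' f m n
    have h1 : ((m : ℚ) + 1) ≠ 0 := by positivity
    have h2 : ((m.factorial : ℚ)) ≠ 0 := by exact_mod_cast Nat.factorial_ne_zero m
    rw [Nat.factorial_succ]
    push_cast at key ⊢
    field_simp
    linear_combination key
  rw [Finset.sum_congr rfl hstep]
  have hmul : ∀ m, PowerSeries.coeff n (f ^ m * PowerSeries.derivativeFun f) / (m.factorial : ℚ) =
      ∑ p ∈ Finset.HasAntidiagonal.antidiagonal n,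
        (PowerSeries.coeff p.1 (f ^ m) / (m.factorial : ℚ)) * PowerSeries.coeff p.2 (PowerSeries.derivativeFun f) := by
    intro m
    rw [PowerSeries.coeff_mul, Finset.sum_div]
    refine Finset.sum_congr rfl fun p _ => ?_
    ring
  rw [Finset.sum_congr rfl fun m _ => hmul m, Finset.sum_comm]
  refine Finset.sum_congr rfl fun p hp => ?_
  rw [Finset.HasAntidiagonal.mem_antidiagonal] at hp
  rw [← Finset.sum_mul, ← coeff_exp_trunc' hf (show p.1 ≤ n by omega)]
  rfl

lemma nat_ident' (L n i j : ℕ) (hij : i + j = n) :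
    ((n+1).factorial)^(L+1) * (j+1) =
    (n+1) * (n.choose j * ((n+1).choose (j+1))^L) * (i.factorial)^(L+1) * ((j+1).factorial)^(L+1) := by
  have h1 : (n+1).choose (j+1) * (j+1).factorial * i.factorial = (n+1).factorial := by
    have := Nat.choose_mul_factorial_mul_factorial (show j+1 ≤ n+1 by omega)
    have hs : n + 1 - (j+1) = i := by omega
    rwa [hs] at this
  have h2 : (n+1) * n.choose j = (n+1).choose (j+1) * (j+1) := Nat.add_one_mul_choose_eq n j
  calc ((n+1).factorial)^(L+1) * (j+1)
      = ((n+1).choose (j+1) * (j+1).factorial * i.factorial)^(L+1) * (j+1) := by rw [h1]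
    _ = ((n+1).choose (j+1) * (j+1)) * (((n+1).choose (j+1))^L * ((j+1).factorial)^(L+1) * (i.factorial)^(L+1)) := by
        rw [mul_pow, mul_pow, pow_succ]; ring
    _ = ((n+1) * n.choose j) * (((n+1).choose (j+1))^L * ((j+1).factorial)^(L+1) * (i.factorial)^(L+1)) := by rw [h2]
    _ = _ := by ring

/-- The integer sequence satisfying the recurrence of `bL`. -/
def B (L : ℕ) : ℕ → ℕ
  | 0 => 1
  | n+1 => ∑ k ∈ (Finset.range (n+1)).attach,
      n.choose (n - k.1) * ((n+1).choose (n - k.1 + 1))^L * B L k.1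
decreasing_by
  have := k.2; simp only [Finset.mem_range] at this; omega

lemma B_pos (L : ℕ) : ∀ n, 0 < B L n := by
  intro n
  induction n using Nat.strong_induction_on with
  | _ n ih =>
    match n with
    | 0 => simp [B]
    | n+1 =>
      rw [B]
      refine Finset.sum_pos' (fun i _ => Nat.zero_le _) ⟨⟨n, by simp⟩, Finset.mem_attach _ _, ?_⟩
      have hc : (n+1).choose (0+1) = n+1 := by simp
      simp only [Nat.sub_self, Nat.choose_zero_right, one_mul, hc]
      exact Nat.mul_pos (pow_pos (Nat.succ_pos n) L) (ih n (by omega))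

lemma hyp_const (L : ℕ) : PowerSeries.constantCoeff (hypFsub1 L) = 0 := by
  have : PowerSeries.coeff 0 (hypFsub1 L) = 0 := by simp [hypFsub1]
  rwa [PowerSeries.coeff_zero_eq_constantCoeff] at this

lemma coeff_deriv_hyp (L j : ℕ) :
    PowerSeries.coeff j (PowerSeries.derivativeFun (hypFsub1 L)) =
      ((j+1 : ℕ) : ℚ) / (((j+1).factorial : ℚ))^(L+1) := by
  rw [coeff_derivativeFun', hypFsub1, PowerSeries.coeff_mk]
  simp only [Nat.succ_ne_zero, if_false]
  push_cast
  ring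

lemma bL_rec (L n : ℕ) :
    bL L (n+1) = ∑ k ∈ Finset.range (n+1),
      ((n.choose (n-k) * ((n+1).choose (n-k+1))^L : ℕ) : ℚ) * bL L k := by
  have hrec := exp_rec' (hyp_const L) n
  rw [Finset.Nat.sum_antidiagonal_eq_sum_range_succ_mk] at hrec
  have hne : ((n+1:ℕ):ℚ) ≠ 0 := by positivity
  apply mul_left_cancel₀ hne
  calc ((n+1:ℕ):ℚ) * bL L (n+1)
      = ((n+1).factorial : ℚ)^(L+1) *
        (((n+1:ℕ):ℚ) * PowerSeries.coeff (n+1) (expPS (hypFsub1 L))) := by rw [bL]; ring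
    _ = ((n+1).factorial : ℚ)^(L+1) *
        ∑ k ∈ Finset.range (n+1), PowerSeries.coeff k (expPS (hypFsub1 L)) *
          PowerSeries.coeff (n-k) (PowerSeries.derivativeFun (hypFsub1 L)) := by rw [hrec]
    _ = _ := by
        rw [Finset.mul_sum, Finset.mul_sum]
        refine Finset.sum_congr rfl fun k hk => ?_
        rw [Finset.mem_range] at hk
        rw [coeff_deriv_hyp, bL]
        have hni := nat_ident' L n k (n-k) (by omega)
        obtain ⟨j, hj⟩ : ∃ j, n - k = j := ⟨_, rfl⟩
        rw [hj] at hni ⊢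
        have hniQ : (((n+1).factorial : ℚ))^(L+1) * ((j+1 : ℕ):ℚ) =
            ((n+1:ℕ):ℚ) * ((n.choose j * ((n+1).choose (j+1))^L : ℕ) : ℚ) *
            ((k.factorial : ℚ))^(L+1) * (((j+1).factorial : ℚ))^(L+1) := by
          exact_mod_cast congrArg (Nat.cast : ℕ → ℚ) hni
        push_cast at hniQ ⊢
        have hfne : (((j+1).factorial : ℚ))^(L+1) ≠ 0 := by
          have : ((j+1).factorial : ℚ) ≠ 0 := by exact_mod_cast Nat.factorial_ne_zero _
          positivity
        field_simp
        linear_combination (PowerSeries.coeff k (expPS (hypFsub1 L))) * hniQ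

lemma bL_zero (L : ℕ) : bL L 0 = 1 := by
  simp [bL, expPS]

lemma bL_eq_B (L : ℕ) : ∀ n, bL L n = (B L n : ℚ) := by
  intro n
  induction n using Nat.strong_induction_on with
  | _ n ih =>
    match n with
    | 0 => rw [bL_zero]; simp [B]
    | n+1 =>
      rw [bL_rec, B, Nat.cast_sum, Finset.sum_attach (Finset.range (n+1))
        (fun k => ((n.choose (n-k) * ((n+1).choose (n-k+1))^L * B L k : ℕ) : ℚ))]
      refine Finset.sum_congr rfl fun k hk => ?_
      rw [Finset.mem_range] at hk
      rw [ih k (by omega)]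
      push_cast
      ring

end Aux

/-- each `b_L(n)` is a positive integer. -/
theorem stmt_1 (L n : ℕ) : ∃ m : ℕ, 0 < m ∧ bL L n = (m : ℚ) := by
  exact ⟨B L n, B_pos L n, bL_eq_B L n⟩
end

section
/- For every integer L ≥ 0 and every natural number n ≥ 0, S_L(n+1,n) = (n(n+1)/2) · ((n+1)!/2)^L, where the right-hand side is computed in ℚ. -/
open PowerSeries Finset

lemma coeff_hypFsub1 (L k : ℕ) :
    PowerSeries.coeff k (hypFsub1 L) =
      if k = 0 then 0 else 1 / (k.factorial : ℚ) ^ (L + 1) := by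
  simp [hypFsub1]

lemma coeff_pow_lt (L : ℕ) : ∀ n m : ℕ, m < n →
    PowerSeries.coeff m (hypFsub1 L ^ n) = 0 := by
  intro n
  induction n with
  | zero => intro m h; omega
  | succ n ih =>
    intro m h
    rw [pow_succ, mul_comm, PowerSeries.coeff_mul,
      Finset.Nat.sum_antidiagonal_eq_sum_range_succ_mk]
    apply Finset.sum_eq_zero
    intro i hi
    simp only [Finset.mem_range] at hi
    rcases Nat.eq_zero_or_pos i with h0 | h0
    · simp [h0, coeff_hypFsub1]
    · rw [ih (m - i) (by omega), mul_zero]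

lemma coeff_pow_self (L : ℕ) : ∀ n : ℕ,
    PowerSeries.coeff n (hypFsub1 L ^ n) = 1 := by
  intro n
  induction n with
  | zero => simp
  | succ n ih =>
    rw [pow_succ, mul_comm, PowerSeries.coeff_mul,
      Finset.Nat.sum_antidiagonal_eq_sum_range_succ_mk]
    rw [Finset.sum_eq_single 1]
    · simp [coeff_hypFsub1, ih]
    · intro i hi hne
      simp only [Finset.mem_range] at hi
      rcases Nat.eq_zero_or_pos i with h0 | h0
      · simp [h0, coeff_hypFsub1]
      · rw [coeff_pow_lt L n (n + 1 - i) (by omega), mul_zero]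
    · intro h; simp at h

lemma coeff_pow_succ (L : ℕ) : ∀ n : ℕ,
    PowerSeries.coeff (n + 1) (hypFsub1 L ^ n) = n / 2 ^ (L + 1) := by
  intro n
  induction n with
  | zero =>
    simp [PowerSeries.coeff_one]
  | succ n ih =>
    rw [pow_succ, mul_comm, PowerSeries.coeff_mul,
      Finset.Nat.sum_antidiagonal_eq_sum_range_succ_mk]
    have hsplit : ∀ i ∈ Finset.range (n + 2 + 1),
        PowerSeries.coeff i (hypFsub1 L) *
          PowerSeries.coeff (n + 2 - i) (hypFsub1 L ^ n) =
        (if i = 1 then (n : ℚ) / 2 ^ (L + 1) else 0)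
        + (if i = 2 then 1 / 2 ^ (L + 1) else 0) := by
      intro i hi
      simp only [Finset.mem_range] at hi
      rcases Nat.eq_zero_or_pos i with h0 | h0
      · simp [h0, coeff_hypFsub1]
      rcases eq_or_ne i 1 with h1 | h1
      · subst h1
        have : n + 2 - 1 = n + 1 := by omega
        rw [this, coeff_hypFsub1, ih]
        norm_num
      rcases eq_or_ne i 2 with h2 | h2
      · subst h2
        have : n + 2 - 2 = n := by omega
        rw [this, coeff_hypFsub1, coeff_pow_self]
        simp [h1, Nat.factorial]
      · rw [coeff_pow_lt L n (n + 2 - i) (by omega), mul_zero]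
        simp [h1, h2]
    rw [Finset.sum_congr rfl hsplit, Finset.sum_add_distrib,
      Finset.sum_ite_eq' (Finset.range (n + 2 + 1)) 1,
      Finset.sum_ite_eq' (Finset.range (n + 2 + 1)) 2]
    simp only [Finset.mem_range, if_pos (by omega : 1 < n + 2 + 1),
      if_pos (by omega : 2 < n + 2 + 1)]
    push_cast
    ring

/-- `S_L(n+1,n) = (n(n+1)/2) · ((n+1)!/2)^L`. -/
theorem stmt_10 (L n : ℕ) :
    SL L (n + 1) n =
      ((n : ℚ) * ((n : ℚ) + 1) / 2) * (((n + 1).factorial : ℚ) / 2) ^ L := by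
  rw [SL, coeff_pow_succ, Nat.factorial_succ]
  have hn : (n.factorial : ℚ) ≠ 0 := Nat.cast_ne_zero.2 n.factorial_ne_zero
  push_cast
  simp only [div_pow]
  field_simp
  ring
end

section
/- For all integers L ≥ 0, p ≥ 0 and every natural number n, the rational number b_L(p,n) is a nonnegative integer. -/
open PowerSeries Finset

/-- coefficients of `f ^ l` below `l` vanish when `f` has zero constant term -/
lemma coeff_pow_zero_of_lt {f : PowerSeries ℚ} (hf : constantCoeff f = 0)
    {n l : ℕ} (h : n < l) : PowerSeries.coeff n (f ^ l) = 0 := by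
  have hd : (PowerSeries.X : PowerSeries ℚ) ^ l ∣ f ^ l :=
    pow_dvd_pow_of_dvd (PowerSeries.X_dvd_iff.mpr hf) l
  exact (PowerSeries.X_pow_dvd_iff.mp hd) n h

/-- differential-equation recurrence for the coefficients of `expPS f` -/
lemma expPS_rec (f : PowerSeries ℚ) (hf : constantCoeff f = 0) (n : ℕ) :
    ((n : ℚ) + 1) * PowerSeries.coeff (n + 1) (expPS f)
      = ∑ j ∈ Finset.range (n + 1),
          PowerSeries.coeff j (expPS f) * (((n - j : ℕ) : ℚ) + 1) *
            PowerSeries.coeff (n - j + 1) f := by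
  have hcoe : PowerSeries.coeff (n + 1) (expPS f)
      = ∑ l ∈ Finset.range (n + 2), PowerSeries.coeff (n + 1) (f ^ l) / (l.factorial : ℚ) := by
    simp [expPS, PowerSeries.coeff_mk]
  rw [hcoe, Finset.mul_sum]
  rw [Finset.sum_range_succ' (fun l => ((n : ℚ) + 1) *
      (PowerSeries.coeff (n + 1) (f ^ l) / (l.factorial : ℚ))) (n+1)]
  have h0 : ((n : ℚ) + 1) * (PowerSeries.coeff (n + 1) (f ^ 0) / ((0:ℕ).factorial : ℚ)) = 0 := by
    simp [PowerSeries.coeff_one]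
  rw [h0, add_zero]
  have hterm : ∀ m, ((n : ℚ) + 1) * (PowerSeries.coeff (n + 1) (f ^ (m+1)) / ((m+1).factorial : ℚ))
      = PowerSeries.coeff n (f ^ m * (PowerSeries.derivativeFun f)) / (m.factorial : ℚ) := by
    intro m
    have h := Derivation.leibniz_pow (PowerSeries.derivative ℚ) f (m+1)
    rw [Nat.add_sub_cancel, smul_eq_mul] at h
    have h2 := congrArg (PowerSeries.coeff n) h
    rw [PowerSeries.coeff_derivative, map_nsmul, nsmul_eq_mul] at h2
    have hkey : PowerSeries.coeff (n+1) (f ^ (m+1)) * ((n:ℚ) + 1)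
        = ((m:ℚ)+1) * PowerSeries.coeff n (f ^ m * PowerSeries.derivativeFun f) := by
      have heq : PowerSeries.coeff n (f ^ m * ((PowerSeries.derivative ℚ) f))
          = PowerSeries.coeff n (f ^ m * PowerSeries.derivativeFun f) := rfl
      rw [← heq]
      push_cast at h2 ⊢
      linear_combination h2
    have hm1 : ((m+1).factorial : ℚ) = ((m:ℚ)+1) * (m.factorial : ℚ) := by
      rw [Nat.factorial_succ]; push_cast; ring
    have hmne : ((m:ℚ)+1) ≠ 0 := by positivity
    have hfac : (m.factorial : ℚ) ≠ 0 := Nat.cast_ne_zero.mpr m.factorial_ne_zero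
    rw [hm1]
    field_simp
    linear_combination hkey
  rw [Finset.sum_congr rfl (fun m _ => hterm m)]
  have hmul : ∀ m ∈ Finset.range (n+1),
      PowerSeries.coeff n (f ^ m * PowerSeries.derivativeFun f) / (m.factorial : ℚ)
      = ∑ j ∈ Finset.range (n+1),
          PowerSeries.coeff j (f ^ m) / (m.factorial : ℚ) *
            ((((n - j : ℕ) : ℚ) + 1) * PowerSeries.coeff (n - j + 1) f) := by
    intro m _
    rw [PowerSeries.coeff_mul, Finset.Nat.sum_antidiagonal_eq_sum_range_succ_mk,
      Finset.sum_div]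
    refine Finset.sum_congr rfl (fun j hj => ?_)
    rw [show f.derivativeFun = PowerSeries.derivative ℚ f from rfl, PowerSeries.coeff_derivative]
    push_cast
    ring
  rw [Finset.sum_congr rfl hmul, Finset.sum_comm]
  refine Finset.sum_congr rfl (fun j hj => ?_)
  rw [← Finset.sum_mul]
  have hsum : ∑ m ∈ Finset.range (n+1), PowerSeries.coeff j (f ^ m) / (m.factorial : ℚ)
      = PowerSeries.coeff j (expPS f) := by
    have hjn : j + 1 ≤ n + 1 := Finset.mem_range.mp hj
    rw [expPS, PowerSeries.coeff_mk]
    symm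
    apply Finset.sum_subset (Finset.range_subset_range.mpr hjn)
    intro m _ hm
    have hjm : j < m := by
      simp only [Finset.mem_range, not_lt] at hm; omega
    rw [coeff_pow_zero_of_lt hf hjm, zero_div]
  rw [hsum]; ring

/-- the integer sequence giving `b_L(p,n)` -/
def Nb (L p : ℕ) : ℕ → ℕ
  | 0 => 1
  | (n+1) => ∑ j : Fin (n+1),
      n.choose j * ((n+1).choose j) ^ L * (if n - (j:ℕ) + 1 ≤ p then 0 else 1) * Nb L p j
  decreasing_by exact j.isLt

lemma key_nat (L n j : ℕ) (hj : j ≤ n) :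
    n.choose j * ((n+1).choose j) ^ L *
      ((j.factorial * (n-j+1).factorial) ^ (L+1))
    = n.factorial ^ (L+1) * (n+1) ^ L * (n-j+1) := by
  have h1 : n.choose j * (j.factorial * (n-j+1).factorial) = n.factorial * (n-j+1) := by
    have h := Nat.choose_mul_factorial_mul_factorial hj
    rw [Nat.factorial_succ]
    calc n.choose j * (j.factorial * ((n-j+1) * (n-j).factorial))
        = (n.choose j * (j.factorial * (n-j).factorial)) * (n-j+1) := by ring
      _ = n.factorial * (n-j+1) := by rw [← mul_assoc, h]
  have h2 : (n+1).choose j * (j.factorial * (n-j+1).factorial) = (n+1) * n.factorial := by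
    have hj' : j ≤ n + 1 := hj.trans (Nat.le_succ n)
    have h := Nat.choose_mul_factorial_mul_factorial hj'
    have hsub : n + 1 - j = n - j + 1 := by omega
    rw [hsub] at h
    rw [← mul_assoc, h, Nat.factorial_succ]
  calc n.choose j * ((n+1).choose j) ^ L * ((j.factorial * (n-j+1).factorial) ^ (L+1))
      = (n.choose j * (j.factorial * (n-j+1).factorial)) *
          ((n+1).choose j * (j.factorial * (n-j+1).factorial)) ^ L := by ring
    _ = (n.factorial * (n-j+1)) * ((n+1) * n.factorial) ^ L := by rw [h1, h2]
    _ = (n.factorial * (n-j+1)) * ((n+1) ^ L * n.factorial ^ L) := by rw [mul_pow]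
    _ = n.factorial ^ (L+1) * (n+1) ^ L * (n-j+1) := by ring

lemma key_q (L n j : ℕ) (hj : j ≤ n) :
    (((n+1).factorial : ℚ)) ^ (L+1) * (((n-j : ℕ) : ℚ) + 1)
      = (n.choose j : ℚ) * ((n+1).choose j : ℚ) ^ L * ((n:ℚ)+1) *
          ((j.factorial : ℚ) * (((n-j+1).factorial : ℚ))) ^ (L+1) := by
  have h := key_nat L n j hj
  have h' : ((n.choose j * ((n+1).choose j) ^ L *
      ((j.factorial * (n-j+1).factorial) ^ (L+1)) : ℕ) : ℚ)
      = ((n.factorial ^ (L+1) * (n+1) ^ L * (n-j+1) : ℕ) : ℚ) := congrArg (fun x : ℕ => (x : ℚ)) h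
  push_cast at h'
  have hfac : (((n+1).factorial : ℚ)) = ((n:ℚ)+1) * (n.factorial : ℚ) := by
    rw [Nat.factorial_succ]; push_cast; ring
  rw [hfac, mul_pow]
  linear_combination (-((n:ℚ)+1)) * h'

lemma Nb_succ (L p n : ℕ) : Nb L p (n+1)
    = ∑ j ∈ Finset.range (n+1),
        n.choose j * ((n+1).choose j) ^ L * (if n - j + 1 ≤ p then 0 else 1) * Nb L p j := by
  rw [Nb, ← Fin.sum_univ_eq_sum_range]

lemma bLp_eq_Nb (L p : ℕ) : ∀ n, bLp L p n = (Nb L p n : ℚ) := by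
  intro n
  induction n using Nat.strong_induction_on with
  | _ n ih =>
    match n with
    | 0 =>
      simp [bLp, Nb, expPS, PowerSeries.coeff_mk]
    | (n+1) =>
      have hf : constantCoeff (hypFtail L p) = 0 := by
        simp [hypFtail, ← PowerSeries.coeff_zero_eq_constantCoeff_apply, PowerSeries.coeff_mk]
      have hrec := expPS_rec (hypFtail L p) hf n
      have hne : ((n:ℚ)+1) ≠ 0 := by positivity
      have hcoeff : PowerSeries.coeff (n+1) (expPS (hypFtail L p))
          = (∑ j ∈ Finset.range (n + 1),
              PowerSeries.coeff j (expPS (hypFtail L p)) * (((n - j : ℕ) : ℚ) + 1) *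
                PowerSeries.coeff (n - j + 1) (hypFtail L p)) / ((n:ℚ)+1) := by
        field_simp
        linarith [hrec]
      have hNb : (Nb L p (n+1) : ℚ) = ∑ j ∈ Finset.range (n+1),
          ((n.choose j : ℚ) * (((n+1).choose j : ℚ)) ^ L *
            (if n - j + 1 ≤ p then 0 else 1) * (Nb L p j : ℚ)) := by
        rw [Nb_succ, Nat.cast_sum]
        refine Finset.sum_congr rfl (fun j _ => ?_)
        push_cast
        split <;> simp
      rw [bLp, hcoeff, hNb, ← mul_div_assoc, Finset.mul_sum, Finset.sum_div]
      refine Finset.sum_congr rfl (fun j hj => ?_)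
      have hjn : j ≤ n := by have := Finset.mem_range.mp hj; omega
      have hco : PowerSeries.coeff j (expPS (hypFtail L p))
          = (Nb L p j : ℚ) / ((j.factorial : ℚ) ^ (L+1)) := by
        have hb := ih j (by omega)
        rw [bLp] at hb
        have hfj : ((j.factorial : ℚ)) ^ (L+1) ≠ 0 := by positivity
        field_simp
        linarith [hb]
      have hft : PowerSeries.coeff (n - j + 1) (hypFtail L p)
          = if n - j + 1 ≤ p then 0 else 1 / (((n-j+1).factorial : ℚ)) ^ (L + 1) := by
        simp [hypFtail, PowerSeries.coeff_mk]
      rw [hco, hft]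
      by_cases hp : n - j + 1 ≤ p
      · simp [hp]
      · rw [if_neg hp, if_neg hp]
        have hq := key_q L n j hjn
        rw [Nat.cast_sub hjn] at hq ⊢
        have hfj : ((j.factorial : ℚ)) ≠ 0 := Nat.cast_ne_zero.mpr j.factorial_ne_zero
        have hfnj : (((n-j+1).factorial : ℚ)) ≠ 0 := Nat.cast_ne_zero.mpr (n-j+1).factorial_ne_zero
        field_simp
        linear_combination (Nb L p j : ℚ) * hq

/-- each `b_L(p,n)` is a nonnegative integer. -/
theorem stmt_18 (L p n : ℕ) : ∃ m : ℕ, bLp L p n = (m : ℚ) := by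
  exact ⟨Nb L p n, bLp_eq_Nb L p n⟩
end
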